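/- Let n be even, and let S, W act on homogeneous degree-n polynomials over ℚ by (S·P)(X,Y) = P(Y,-X) and (W·P)(X,Y) = P(Y,X). Then the dimension of {P : S·P = -P and W·P = P} equals (n + 1 + (-1)^{n/2+1})/4. -/

import Mathlib

open MvPolynomial Module

lemma degree_two (e : Fin 2 →₀ ℕ) : e.degree = e 0 + e 1 := by
  rw [show e.degree = e.sum (fun _ m => m) from rfl, Finsupp.sum_fintype] <;>
    simp [Fin.sum_univ_two]

noncomputable def sw (e : Fin 2 →₀ ℕ) : Fin 2 →₀ ℕ :=
  Finsupp.single 0 (e 1) + Finsupp.single 1 (e 0)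

lemma sw_apply0 (e : Fin 2 →₀ ℕ) : sw e 0 = e 1 := by simp [sw]
lemma sw_apply1 (e : Fin 2 →₀ ℕ) : sw e 1 = e 0 := by simp [sw, Finsupp.single_apply]
lemma sw_sw (e : Fin 2 →₀ ℕ) : sw (sw e) = e := by
  ext i; fin_cases i <;> simp [sw, Finsupp.single_apply]

lemma aevalA_monomial (d : Fin 2 →₀ ℕ) (c : ℚ) :
    aeval ![X 1, -X 0] (monomial d c : MvPolynomial (Fin 2) ℚ)
      = ((-1:ℚ) ^ (d 1)) • monomial (sw d) c := by
  have hneg : (-X 0 : MvPolynomial (Fin 2) ℚ) ^ (d 1)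
      = (-1 : MvPolynomial (Fin 2) ℚ) ^ (d 1) * X 0 ^ (d 1) := by
    rw [← mul_pow]; ring_nf
  rw [aeval_monomial, Finsupp.prod_pow, Fin.prod_univ_two]
  rw [monomial_eq, Finsupp.prod_pow, Fin.prod_univ_two, sw_apply0, sw_apply1]
  simp only [Matrix.cons_val_zero, Matrix.cons_val_one, Matrix.head_cons]
  rw [hneg, algebraMap_eq, Algebra.smul_def, algebraMap_eq]
  rw [show (C ((-1:ℚ)^(d 1)) : MvPolynomial (Fin 2) ℚ)
      = (-1 : MvPolynomial (Fin 2) ℚ) ^ (d 1) by rw [map_pow, map_neg, map_one]]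
  ring

lemma aevalB_monomial (d : Fin 2 →₀ ℕ) (c : ℚ) :
    aeval ![X 1, X 0] (monomial d c : MvPolynomial (Fin 2) ℚ)
      = monomial (sw d) c := by
  rw [aeval_monomial, Finsupp.prod_pow, Fin.prod_univ_two]
  rw [monomial_eq, Finsupp.prod_pow, Fin.prod_univ_two, sw_apply0, sw_apply1]
  simp only [Matrix.cons_val_zero, Matrix.cons_val_one, Matrix.head_cons]
  rw [algebraMap_eq]
  ring

lemma coeffA (e : Fin 2 →₀ ℕ) (P : MvPolynomial (Fin 2) ℚ) :
    coeff e (aeval ![X 1, -X 0] P) = (-1:ℚ) ^ (e 0) * coeff (sw e) P := by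
  induction P using MvPolynomial.induction_on' with
  | monomial d c =>
    rw [aevalA_monomial, coeff_smul, coeff_monomial, coeff_monomial]
    by_cases h : d = sw e
    · subst h
      simp [sw_sw, sw_apply1]
    · have h2 : sw d ≠ e := fun he => h (by rw [← he, sw_sw])
      simp [h, h2]
  | add p q hp hq => rw [map_add, coeff_add, coeff_add, hp, hq]; ring

lemma coeffB (e : Fin 2 →₀ ℕ) (P : MvPolynomial (Fin 2) ℚ) :
    coeff e (aeval ![X 1, X 0] P) = coeff (sw e) P := by
  induction P using MvPolynomial.induction_on' with
  | monomial d c =>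
    rw [aevalB_monomial, coeff_monomial, coeff_monomial]
    by_cases h : d = sw e
    · subst h; simp [sw_sw]
    · have h2 : sw d ≠ e := fun he => h (by rw [← he, sw_sw])
      simp [h, h2]
  | add p q hp hq => rw [map_add, coeff_add, coeff_add, hp, hq]

noncomputable def expo (n i : ℕ) : Fin 2 →₀ ℕ :=
  Finsupp.single 0 i + Finsupp.single 1 (n - i)

lemma expo_apply0 (n i : ℕ) : expo n i 0 = i := by simp [expo]
lemma expo_apply1 (n i : ℕ) : expo n i 1 = n - i := by simp [expo, Finsupp.single_apply]
lemma expo_degree (n i : ℕ) (h : i ≤ n) : (expo n i).degree = n := by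
  rw [degree_two, expo_apply0, expo_apply1]; omega
lemma sw_expo (n i : ℕ) (h : i ≤ n) : sw (expo n i) = expo n (n - i) := by
  ext j; fin_cases j <;> simp [sw, expo, Finsupp.single_apply] <;> omega
lemma expo_inj (n i j : ℕ) (h : expo n i = expo n j) : i = j := by
  have := congrArg (fun f => f 0) h
  simpa [expo_apply0] using this
lemma eq_expo (n : ℕ) (e : Fin 2 →₀ ℕ) (h : e 0 + e 1 = n) : e = expo n (e 0) := by
  ext j; fin_cases j <;> simp [expo, Finsupp.single_apply] <;> omega

lemma expo_eq_iff (n i j : ℕ) : expo n i = expo n j ↔ i = j :=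
  ⟨expo_inj n i j, fun h => by rw [h]⟩

noncomputable def Msub (n : ℕ) : Submodule ℚ (MvPolynomial (Fin 2) ℚ) :=
  homogeneousSubmodule (Fin 2) ℚ n ⊓
    LinearMap.ker
      ((aeval ![X 1, -X 0] :
        MvPolynomial (Fin 2) ℚ →ₐ[ℚ] MvPolynomial (Fin 2) ℚ).toLinearMap
        + LinearMap.id) ⊓
    LinearMap.ker
      ((aeval ![X 1, X 0] :
        MvPolynomial (Fin 2) ℚ →ₐ[ℚ] MvPolynomial (Fin 2) ℚ).toLinearMap
        - LinearMap.id)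

lemma mem_Msub (n : ℕ) (P : MvPolynomial (Fin 2) ℚ) :
    P ∈ Msub n ↔ P.IsHomogeneous n ∧
      aeval ![X 1, -X 0] P = -P ∧ aeval ![X 1, X 0] P = P := by
  simp only [Msub, Submodule.mem_inf, LinearMap.mem_ker, LinearMap.add_apply,
    LinearMap.sub_apply, LinearMap.id_apply, AlgHom.toLinearMap_apply,
    mem_homogeneousSubmodule, and_assoc, add_eq_zero_iff_eq_neg, sub_eq_zero]

noncomputable def bpoly (n j : ℕ) : MvPolynomial (Fin 2) ℚ :=
  monomial (expo n (2*j+1)) 1 + monomial (expo n (n-(2*j+1))) 1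

lemma bpoly_mem (n j : ℕ) (he : Even n) (hj : 2*j+1 ≤ n/2) : bpoly n j ∈ Msub n := by
  obtain ⟨m, hm⟩ := he
  have h1 : 2*j+1 ≤ n := by omega
  have h2 : n - (2*j+1) ≤ n := by omega
  rw [mem_Msub]
  refine ⟨?_, ?_, ?_⟩
  · exact ((isHomogeneous_monomial _ (expo_degree n _ h1)).add
      (isHomogeneous_monomial _ (expo_degree n _ h2)))
  · rw [bpoly, map_add, aevalA_monomial, aevalA_monomial, sw_expo n _ h1, sw_expo n _ h2,
      expo_apply1, expo_apply1]
    have o1 : Odd (n - (2*j+1)) := ⟨m - j - 1, by omega⟩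
    have o2 : Odd (n - (n - (2*j+1))) := ⟨j, by omega⟩
    rw [o1.neg_one_pow, o2.neg_one_pow]
    rw [show n - (n - (2*j+1)) = 2*j+1 by omega]
    simp only [neg_add_rev, neg_smul, one_smul]
  · rw [bpoly, map_add, aevalB_monomial, aevalB_monomial, sw_expo n _ h1, sw_expo n _ h2,
      show n - (n - (2*j+1)) = 2*j+1 by omega]
    ring

noncomputable def phi (n : ℕ) : Msub n →ₗ[ℚ] (Fin ((n/2+1)/2) → ℚ) where
  toFun P := fun j => coeff (expo n (2*(j:ℕ)+1)) (P : MvPolynomial (Fin 2) ℚ)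
  map_add' P Q := by funext j; simp [coeff_add]
  map_smul' c P := by funext j; simp [coeff_smul]

lemma phi_apply (n : ℕ) (P : Msub n) (j : Fin ((n/2+1)/2)) :
    phi n P j = coeff (expo n (2*(j:ℕ)+1)) (P : MvPolynomial (Fin 2) ℚ) := rfl

lemma phi_inj (n : ℕ) (he : Even n) : Function.Injective (phi n) := by
  rw [injective_iff_map_eq_zero]
  intro P hP
  obtain ⟨m, hm⟩ := he
  obtain ⟨hhom, hA, hB⟩ := (mem_Msub n _).mp P.2
  set Q : MvPolynomial (Fin 2) ℚ := (P : MvPolynomial (Fin 2) ℚ) with hQ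
  have hker1 : ∀ e : Fin 2 →₀ ℕ, (-1:ℚ) ^ (e 0) * coeff (sw e) Q = - coeff e Q := by
    intro e; rw [← coeffA, hA, coeff_neg]
  have hker2 : ∀ e : Fin 2 →₀ ℕ, coeff (sw e) Q = coeff e Q := by
    intro e; rw [← coeffB, hB]
  have hsmall : ∀ i : ℕ, Odd i → 2*i ≤ n → coeff (expo n i) Q = 0 := by
    intro i hodd hle
    obtain ⟨t, ht⟩ := hodd
    have hj : t < (n/2+1)/2 := by omega
    have := congrFun hP ⟨t, hj⟩
    simpa [phi_apply, show 2*t+1 = i by omega] using this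
  have key : ∀ e : Fin 2 →₀ ℕ, coeff e Q = 0 := by
    intro e
    by_cases hd : e 0 + e 1 = n
    · have h0n : e 0 ≤ n := by omega
      have heq : e = expo n (e 0) := eq_expo n e hd
      rcases Nat.even_or_odd (e 0) with hev | hodd
      · have h1 := hker1 e
        have h2 := hker2 e
        rw [h2, hev.neg_one_pow, one_mul] at h1
        linarith
      · by_cases hle : 2 * (e 0) ≤ n
        · rw [heq]; exact hsmall _ hodd hle
        · have h2 := hker2 e
          rw [heq, sw_expo n _ h0n] at h2
          rw [heq, ← h2]
          refine hsmall _ ?_ (by omega)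
          obtain ⟨t, ht⟩ := hodd
          exact ⟨m - t - 1, by omega⟩
    · exact hhom.coeff_eq_zero (by rw [degree_two]; exact hd)
  have : Q = 0 := by ext e; rw [key e, coeff_zero]
  exact Subtype.ext this

lemma phi_surj (n : ℕ) (he : Even n) : Function.Surjective (phi n) := by
  rw [← LinearMap.range_eq_top]
  rw [← top_le_iff, ← (Pi.basisFun ℚ (Fin ((n/2+1)/2))).span_eq, Submodule.span_le]
  rintro _ ⟨j, rfl⟩
  rw [Pi.basisFun_apply]
  obtain ⟨m, hm⟩ := he
  have hj : 2*(j:ℕ)+1 ≤ n/2 := by have := j.2; omega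
  have hj' : 2*(j:ℕ)+1 ≤ n := by omega
  set c : ℚ := if n - (2*(j:ℕ)+1) = 2*(j:ℕ)+1 then (2:ℚ)⁻¹ else 1 with hc
  refine ⟨c • ⟨bpoly n j, bpoly_mem n j ⟨m, hm⟩ hj⟩, ?_⟩
  funext j'
  have hj2 : 2*(j':ℕ)+1 ≤ n/2 := by have := j'.2; omega
  rw [map_smul]
  rw [Pi.smul_apply, phi_apply]
  simp only [Submodule.coe_mk]
  rw [bpoly, coeff_add, coeff_monomial, coeff_monomial]
  by_cases hjj : j' = j
  · subst hjj
    by_cases hcen : n - (2*(j':ℕ)+1) = 2*(j':ℕ)+1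
    · rw [if_pos (by rw [expo_eq_iff]), if_pos (by rw [expo_eq_iff]; omega)]
      rw [hc, if_pos hcen, Pi.single_apply, if_pos rfl]
      norm_num
    · rw [if_pos (by rw [expo_eq_iff]), if_neg (by rw [expo_eq_iff]; omega)]
      rw [hc, if_neg hcen, Pi.single_apply, if_pos rfl]
      norm_num
  · have hne : (j:ℕ) ≠ (j':ℕ) := fun h => hjj (Fin.ext h.symm)
    rw [if_neg (by rw [expo_eq_iff]; omega), if_neg (by rw [expo_eq_iff]; omega)]
    rw [Pi.single_apply, if_neg hjj]
    norm_num

lemma finrank_Msub (n : ℕ) (he : Even n) :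
    finrank ℚ (Msub n) = (n/2+1)/2 := by
  have e := LinearEquiv.ofBijective (phi n) ⟨phi_inj n he, phi_surj n he⟩
  rw [e.finrank_eq, finrank_fintype_fun_eq_card, Fintype.card_fin]

theorem dim_antiinvariant_symmetric (n : ℕ) (he : Even n) :
    (4 * finrank ℚ
        ↥(homogeneousSubmodule (Fin 2) ℚ n ⊓
          LinearMap.ker
            ((aeval ![X 1, -X 0] :
              MvPolynomial (Fin 2) ℚ →ₐ[ℚ] MvPolynomial (Fin 2) ℚ).toLinearMap
              + LinearMap.id) ⊓
          LinearMap.ker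
            ((aeval ![X 1, X 0] :
              MvPolynomial (Fin 2) ℚ →ₐ[ℚ] MvPolynomial (Fin 2) ℚ).toLinearMap
              - LinearMap.id)) : ℤ)
      = n + 1 + (-1) ^ (n / 2 + 1) := by
  have hr : finrank ℚ (Msub n) = (n/2+1)/2 := finrank_Msub n he
  show (4 * (finrank ℚ (Msub n) : ℤ)) = n + 1 + (-1) ^ (n / 2 + 1)
  rw [hr]
  obtain ⟨m, hm⟩ := he
  have hn2 : n / 2 = m := by omega
  rw [hn2]
  rcases Nat.even_or_odd m with ⟨k, hk⟩ | ⟨k, hk⟩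
  · have ho : Odd (m+1) := ⟨m/2, by omega⟩
    rw [ho.neg_one_pow]
    have : (m+1)/2 = k := by omega
    rw [this]; push_cast; omega
  · have hev : Even (m+1) := ⟨(m+1)/2, by omega⟩
    rw [hev.neg_one_pow]
    have : (m+1)/2 = k+1 := by omega
    rw [this]; push_cast; omega
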